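/- Let M = I ×_f F be a standard static space-time with dim F ≥ 2. If the Ricci tensor Ric_{g_F} of (F,g_F) and the tensor Q_{g_F}^f = (Δ_{g_F} f) g_F − Hess_{g_F} f are both positive semi-definite, then M satisfies the timelike convergence condition and the null convergence condition: Ric(w,w) ≥ 0 for every causal tangent vector w on M. -/

import Mathlib

open RealInnerProductSpace

/-- Let `M = I ×_f F` be a standard static space-time with `dim F ≥ 2`
(tangent vectors of `M` modeled as pairs `(a, v) ∈ ℝ × V`; the Ricci tensor of
`(M,g)` given by the standard static Ricci formula).  If the Ricci tensor
`Ric_{g_F}` of `(F,g_F)` and the tensor `Q_{g_F}^f = (Δ_{g_F} f) g_F − Hess_{g_F} f`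
are both positive semi-definite, then `M` satisfies the timelike and null
convergence conditions: `Ric(w,w) ≥ 0` for every causal tangent vector `w`
(i.e. `w ≠ 0` with `g(w,w) ≤ 0`). -/
theorem RicF_Q_psd_implies_TCC_NCC
    {F V : Type*} [NormedAddCommGroup V] [InnerProductSpace ℝ V]
    [FiniteDimensional ℝ V]
    (f : F → ℝ) (hf : ∀ p, 0 < f p)
    (Δf : F → ℝ) (Hf RicF : F → V → V → ℝ)
    (RicM : F → (ℝ × V) → (ℝ × V) → ℝ)     -- Ricci tensor of (M, g)
    (gM : F → (ℝ × V) → (ℝ × V) → ℝ)       -- the metric g = −f² dt² ⊕ g_F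
    (hs : 2 ≤ Module.finrank ℝ V)
    (hg : ∀ p a v b w, gM p (a, v) (b, w) = -(f p) ^ 2 * (a * b) + ⟪v, w⟫)
    (hΔ : ∀ p, Δf p = ∑ i, Hf p (stdOrthonormalBasis ℝ V i) (stdOrthonormalBasis ℝ V i))
    (hRic : ∀ p u₁ u₂ v₁ v₂, RicM p (u₁, v₁) (u₂, v₂)
      = RicF p v₁ v₂ + f p * Δf p * (u₁ * u₂) - (1 / f p) * Hf p v₁ v₂)
    -- Ric_{g_F} positive semi-definite:
    (hRicFpsd : ∀ p v, 0 ≤ RicF p v v)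
    -- Q_{g_F}^f positive semi-definite:
    (hQpsd : ∀ p v, 0 ≤ Δf p * ⟪v, v⟫ - Hf p v v) :
    ∀ p (w : ℝ × V), w ≠ 0 → gM p w w ≤ 0 → 0 ≤ RicM p w w := by
  intro p w _ hcausal
  obtain ⟨a, v⟩ := w
  rw [hg] at hcausal
  rw [hRic]
  have hfp := hf p
  -- Δf p ≥ 0
  have hΔnn : 0 ≤ Δf p := by
    have hsum : 0 ≤ ∑ i, (Δf p * ⟪(stdOrthonormalBasis ℝ V) i, (stdOrthonormalBasis ℝ V) i⟫
        - Hf p ((stdOrthonormalBasis ℝ V) i) ((stdOrthonormalBasis ℝ V) i)) :=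
      Finset.sum_nonneg fun i _ => hQpsd p _
    have hnorm : ∀ i, (inner ℝ ((stdOrthonormalBasis ℝ V) i) ((stdOrthonormalBasis ℝ V) i) : ℝ) = 1 := by
      intro i
      rw [real_inner_self_eq_norm_sq, (stdOrthonormalBasis ℝ V).orthonormal.1 i]
      norm_num
    simp only [hnorm, mul_one, Finset.sum_sub_distrib, Finset.sum_const,
      Finset.card_univ, Fintype.card_fin, ← hΔ p, nsmul_eq_mul] at hsum
    have h1 : (2 : ℝ) ≤ (Module.finrank ℝ V : ℝ) := by exact_mod_cast hs
    nlinarith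
  have hHf : Hf p v v ≤ Δf p * (inner ℝ v v : ℝ) := by linarith [hQpsd p v]
  have hvv : (inner ℝ v v : ℝ) ≤ f p ^ 2 * (a * a) := by nlinarith
  have hstep : Hf p v v ≤ Δf p * (f p ^ 2 * (a * a)) :=
    hHf.trans (mul_le_mul_of_nonneg_left hvv hΔnn)
  have hinv : (0:ℝ) < 1 / f p := by positivity
  have : (1 / f p) * Hf p v v ≤ (1 / f p) * (Δf p * (f p ^ 2 * (a * a))) :=
    mul_le_mul_of_nonneg_left hstep hinv.le
  have heq : (1 / f p) * (Δf p * (f p ^ 2 * (a * a))) = f p * Δf p * (a * a) := by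
    field_simp
  have := hRicFpsd p v
  nlinarith
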